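/- arXiv:1712.06484 — 4 statements merged into one kernel-verified Lean document; each statement's English description precedes it below -/
import Mathlib

section
/- Let F be a field of prime characteristic p, A an associative F-algebra, and e ∈ A with e^{⌊(p+1)/2⌋} = 0. Define the truncated exponential Y(t) = Σ_{k=0}^{p-1} (t^k / k!) · e^{k} for t ∈ F. Then for every x ∈ A and every t ∈ F: Σ_{k=0}^{p-1} (t^k / k!) · (ad e)^k (x) = Y(t) · x · Y(-t). -/
open Finset LinearMap

-- Step 1: expansion of the iterated adjoint
theorem ad_iter_expand {F : Type*} [Field F] {A : Type*} [Ring A] [Algebra F A]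
    (e : A) (x : A) (k : ℕ) :
    (fun y => e * y - y * e)^[k] x =
      ∑ m ∈ Finset.range (k + 1),
        ((-1 : F) ^ (k - m) * (k.choose m : F)) • (e ^ m * x * e ^ (k - m)) := by
  have hfun : (fun y => e * y - y * e) = ⇑(mulLeft F e - mulRight F e) := by
    ext y; simp [mulLeft_apply, mulRight_apply]
  rw [hfun, ← Module.End.pow_apply]
  have hc : Commute (mulLeft F e) (-(mulRight F e)) :=
    (LinearMap.commute_mulLeft_right (R := F) e e).neg_right
  rw [sub_eq_add_neg, hc.add_pow k]
  rw [LinearMap.sum_apply]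
  refine Finset.sum_congr rfl fun m _ => ?_
  have : (-(mulRight F e)) ^ (k - m) = (-1 : F) ^ (k-m) • mulRight F (e ^ (k-m)) := by
    rw [neg_pow, ← pow_mulRight]
    simp [neg_one_smul, Units.smul_def]
    rcases Nat.even_or_odd (k - m) with h | h
    · simp [h.neg_one_pow, Even.neg_pow h]
      rw [← pow_mulRight]; exact Even.neg_pow h (mulRight F e : Module.End F A)
    · simp [h.neg_one_pow, Odd.neg_pow h]
      convert Odd.neg_pow h (mulRight F e : Module.End F A) using 1
      rw [← pow_mulRight]; ext y; simp
  rw [Module.End.mul_apply, Module.End.mul_apply, this]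
  simp only [LinearMap.smul_apply, mulRight_apply, map_smul, pow_mulLeft, mulLeft_apply,
    Module.End.natCast_apply]
  rw [mul_smul, mul_assoc]
  congr 1
  rw [smul_mul_assoc, mul_smul_comm, Nat.cast_smul_eq_nsmul]

/-- Under the over-restricted condition `e^{⌊(p+1)/2⌋} = 0`, the truncated exponential
of `t • ad e` applied to `x` equals conjugation by the truncated exponential
`Y(t) = ∑_{k=0}^{p-1} (t^k/k!) e^k`:
`∑_{k=0}^{p-1} (t^k/k!) (ad e)^k (x) = Y(t) x Y(-t)`. -/
theorem truncExp_ad_eq_conj {F : Type*} [Field F] (p : ℕ) [Fact p.Prime] [CharP F p]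
    {A : Type*} [Ring A] [Algebra F A] (e : A) (he : e ^ ((p + 1) / 2) = 0)
    (x : A) (t : F) :
    ∑ k ∈ Finset.range p, (t ^ k / (k.factorial : F)) • (fun y => e * y - y * e)^[k] x =
      (∑ k ∈ Finset.range p, (t ^ k / (k.factorial : F)) • e ^ k) * x *
        (∑ k ∈ Finset.range p, ((-t) ^ k / (k.factorial : F)) • e ^ k) := by
  classical
  have hp : p.Prime := Fact.out
  have hfac : ∀ k : ℕ, k < p → ((k.factorial : F) ≠ 0) := by
    intro k hk h
    rw [CharP.cast_eq_zero_iff F p] at h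
    exact absurd (hp.dvd_factorial.mp h) (by omega)
  set f : ℕ × ℕ → A := fun q =>
    ((t ^ q.1 / (q.1.factorial : F)) * ((-t) ^ q.2 / (q.2.factorial : F))) •
      (e ^ q.1 * x * e ^ q.2) with hf
  have hzero : ∀ q ∈ Finset.range p ×ˢ Finset.range p, ¬ (q.1 + q.2 < p) → f q = 0 := by
    intro q hq hlt
    have hmem : q.1 < p ∧ q.2 < p := by
      simpa [Finset.mem_product, Finset.mem_range] using hq
    have h2 : (p + 1) / 2 ≤ q.1 ∨ (p + 1) / 2 ≤ q.2 := by omega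
    rcases h2 with h | h
    · have h1 : e ^ q.1 = 0 := by
        rw [← Nat.sub_add_cancel h, pow_add, he, mul_zero]
      simp [hf, h1]
    · have h1 : e ^ q.2 = 0 := by
        rw [← Nat.sub_add_cancel h, pow_add, he, mul_zero]
      simp [hf, h1]
  have hRHS : (∑ k ∈ Finset.range p, (t ^ k / (k.factorial : F)) • e ^ k) * x *
        (∑ k ∈ Finset.range p, ((-t) ^ k / (k.factorial : F)) • e ^ k)
      = ∑ q ∈ Finset.range p ×ˢ Finset.range p, f q := by
    rw [Finset.sum_mul, Finset.sum_mul_sum, ← Finset.sum_product']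
    refine Finset.sum_congr rfl fun q _ => ?_
    simp only [hf, smul_mul_assoc, mul_smul_comm, smul_smul, mul_comm]
  have hLHS : (∑ k ∈ Finset.range p, (t ^ k / (k.factorial : F)) • (fun y => e * y - y * e)^[k] x)
      = ∑ q ∈ (Finset.range p ×ˢ Finset.range p).filter (fun q => q.1 + q.2 < p), f q := by
    have step1 : ∀ k ∈ Finset.range p,
        (t ^ k / (k.factorial : F)) • (fun y => e * y - y * e)^[k] x
          = ∑ m ∈ Finset.range (k + 1), f (m, k - m) := by
      intro k hk
      rw [Finset.mem_range] at hk
      rw [ad_iter_expand (F := F) e x k, Finset.smul_sum]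
      refine Finset.sum_congr rfl fun m hm => ?_
      rw [Finset.mem_range] at hm
      have hmk : m ≤ k := by omega
      rw [smul_smul]
      simp only [hf]
      congr 1
      have h1 : (k.factorial : F) ≠ 0 := hfac k hk
      have h2 : (m.factorial : F) ≠ 0 := hfac m (by omega)
      have h3 : ((k - m).factorial : F) ≠ 0 := hfac (k - m) (by omega)
      have hch : ((k.choose m : F)) * m.factorial * (k - m).factorial = k.factorial := by
        rw_mod_cast [Nat.choose_mul_factorial_mul_factorial hmk]
      have ht : t ^ k = t ^ m * t ^ (k - m) := by rw [← pow_add]; congr 1; omega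
      have hnt : (-t) ^ (k - m) = (-1) ^ (k - m) * t ^ (k - m) := by rw [neg_pow]
      field_simp
      rw [ht, hnt, ← hch]
      ring
    rw [Finset.sum_congr rfl step1, Finset.sum_sigma']
    refine Finset.sum_nbij' (fun q => (q.2, q.1 - q.2)) (fun q => ⟨q.1 + q.2, q.1⟩)
      ?_ ?_ ?_ ?_ ?_
    · intro q hq
      simp only [Finset.mem_sigma, Finset.mem_range] at hq
      simp only [Finset.mem_filter, Finset.mem_product, Finset.mem_range]
      omega
    · intro q hq
      simp only [Finset.mem_filter, Finset.mem_product, Finset.mem_range] at hq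
      simp only [Finset.mem_sigma, Finset.mem_range]
      omega
    · intro q hq
      simp only [Finset.mem_sigma, Finset.mem_range] at hq
      simp only [show q.snd + (q.fst - q.snd) = q.fst from by omega]
    · intro q hq; simp
    · intro q hq; rfl
  rw [hLHS, hRHS, ← Finset.sum_filter_add_sum_filter_not (Finset.range p ×ˢ Finset.range p)
    (fun q => q.1 + q.2 < p) f]
  rw [Finset.sum_eq_zero (fun q hq => hzero q (Finset.mem_filter.mp hq).1
    (Finset.mem_filter.mp hq).2), add_zero]
end

section
/- Let F be a field of prime characteristic p, let L be a Lie algebra over F, let V be an F-vector space, and let ρ : L → End_F(V) be a Lie algebra homomorphism (a representation of L on V). Let e ∈ L satisfy the over-restricted condition ρ(e)^{⌊(p+1)/2⌋} = 0, and define Y(t) = Σ_{k=0}^{p-1} (t^k / k!) · ρ(e)^{k} ∈ End_F(V) for t ∈ F. Then for every x ∈ L and t ∈ F: Σ_{k=0}^{p-1} (t^k / k!) · ρ( (ad e)^k (x) ) = Y(t) ∘ ρ(x) ∘ Y(-t), where ad e : L → L is the adjoint action y ↦ ⁅e, y⁆ of the Lie algebra L. -/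
open Finset LinearMap

attribute [local instance 100] LieRing.ofAssociativeRing

lemma iter_conj_eq {F : Type*} [Field F] {V : Type*} [AddCommGroup V] [Module F V]
    (A X : Module.End F V) (k : ℕ) :
    (fun Y => A * Y - Y * A)^[k] X =
      ∑ ij ∈ Finset.HasAntidiagonal.antidiagonal k,
        (k.choose ij.1 : F) • ((-1 : F) ^ ij.2 • (A ^ ij.1 * X * A ^ ij.2)) := by
  have h1 : (fun Y => A * Y - Y * A)^[k] X =
      ((LinearMap.mulLeft F A + -(LinearMap.mulRight F A)) ^ k) X := by
    rw [Module.End.pow_apply]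
    congr 1
    funext Y
    simp [sub_eq_add_neg]
  have h2 : ∀ (j : ℕ) (Z : Module.End F V),
      ((-(LinearMap.mulRight F A)) ^ j) Z = (-1 : F) ^ j • (Z * A ^ j) := by
    intro j
    induction j with
    | zero => intro Z; simp
    | succ n ih =>
      intro Z
      rw [pow_succ, Module.End.mul_apply, ih]
      simp [pow_succ, mul_assoc, neg_mul, mul_neg, pow_mul_comm']
  rw [h1, ((LinearMap.commute_mulLeft_right (R := F) A A).neg_right).add_pow' k,
    LinearMap.sum_apply]
  refine Finset.sum_congr rfl fun ij hij => ?_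
  rw [LinearMap.smul_apply, Module.End.mul_apply, h2, LinearMap.pow_mulLeft,
    LinearMap.map_smul, LinearMap.mulLeft_apply, ← Nat.cast_smul_eq_nsmul F, mul_assoc]

/-- Let `ρ : L → End_F V` be a representation of a Lie algebra `L` over a field `F` of
prime characteristic `p`, and let `e ∈ L` satisfy the over-restricted condition
`ρ(e)^{⌊(p+1)/2⌋} = 0`. With `Y(t) = ∑_{k=0}^{p-1} (t^k/k!) ρ(e)^k`, for every `x ∈ L`
and `t ∈ F` one has `∑_{k=0}^{p-1} (t^k/k!) ρ((ad e)^k x) = Y(t) ∘ ρ(x) ∘ Y(-t)`. -/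
theorem rep_truncExp_ad_eq_conj {F : Type*} [Field F] (p : ℕ) [Fact p.Prime] [CharP F p]
    {L : Type*} [LieRing L] [LieAlgebra F L]
    {V : Type*} [AddCommGroup V] [Module F V]
    (ρ : L →ₗ⁅F⁆ Module.End F V) (e : L)
    (he : (ρ e) ^ ((p + 1) / 2) = 0) (x : L) (t : F) :
    ∑ k ∈ Finset.range p, (t ^ k / (k.factorial : F)) • ρ ((fun y => ⁅e, y⁆)^[k] x) =
      (∑ k ∈ Finset.range p, (t ^ k / (k.factorial : F)) • (ρ e) ^ k) * ρ x *
        (∑ k ∈ Finset.range p, ((-t) ^ k / (k.factorial : F)) • (ρ e) ^ k) := by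
  have hp := (Fact.out : p.Prime)
  set A := ρ e with hA
  set X := ρ x with hX
  set g : ℕ × ℕ → Module.End F V := fun ij =>
    ((t ^ ij.1 / (ij.1.factorial : F)) * ((-t) ^ ij.2 / (ij.2.factorial : F))) •
      (A ^ ij.1 * X * A ^ ij.2) with hg
  -- factorials are nonzero
  have hfact : ∀ k, k < p → ((k.factorial : F) ≠ 0) := by
    intro k hk
    rw [Ne, CharP.cast_eq_zero_iff F p]
    rw [hp.dvd_factorial]
    omega
  -- terms with i + j ≥ p vanish
  have hzero : ∀ ij : ℕ × ℕ, p ≤ ij.1 + ij.2 → g ij = 0 := by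
    intro ij hij
    have : (p + 1) / 2 ≤ ij.1 ∨ (p + 1) / 2 ≤ ij.2 := by omega
    rcases this with h | h
    · rw [hg]
      simp only
      rw [pow_eq_zero_of_le h he, zero_mul, zero_mul, smul_zero]
    · rw [hg]
      simp only
      rw [pow_eq_zero_of_le h he, mul_zero, smul_zero]
  -- iterate of the bracket maps to the associative commutator iterate
  have hiter : ∀ k, ρ ((fun y => ⁅e, y⁆)^[k] x) = (fun Y => A * Y - Y * A)^[k] X := by
    intro k
    induction k with
    | zero => simp [hX]
    | succ n ih =>
      rw [Function.iterate_succ_apply', Function.iterate_succ_apply', LieHom.map_lie, ih,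
        Ring.lie_def]
  -- LHS as a sum over the triangle
  have hlhs : ∑ k ∈ Finset.range p, (t ^ k / (k.factorial : F)) • ρ ((fun y => ⁅e, y⁆)^[k] x)
      = ∑ k ∈ Finset.range p, ∑ ij ∈ Finset.HasAntidiagonal.antidiagonal k, g ij := by
    refine Finset.sum_congr rfl fun k hk => ?_
    rw [hiter, iter_conj_eq, Finset.smul_sum]
    refine Finset.sum_congr rfl fun ij hij => ?_
    rw [Finset.HasAntidiagonal.mem_antidiagonal] at hij
    rw [smul_smul, smul_smul, hg]
    simp only
    congr 1
    have hk' : k < p := Finset.mem_range.mp hk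
    have h1 : (ij.1.factorial : F) ≠ 0 := hfact _ (by omega)
    have h2 : (ij.2.factorial : F) ≠ 0 := hfact _ (by omega)
    have h3 : (k.factorial : F) ≠ 0 := hfact _ hk'
    obtain ⟨i, j⟩ := ij
    simp only at hij ⊢
    subst hij
    have hc : (((i + j).choose i : ℕ) : F) * (i.factorial : F) * (j.factorial : F)
        = ((i + j).factorial : F) := by
      rw [Nat.choose_symm_add]
      exact_mod_cast congrArg (Nat.cast : ℕ → F)
        (Nat.add_choose_mul_factorial_mul_factorial i j)
    rw [neg_pow t, pow_add]
    field_simp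
    linear_combination (t ^ i * t ^ j) * hc
  -- RHS as a sum over the square
  have hrhs : (∑ k ∈ Finset.range p, (t ^ k / (k.factorial : F)) • A ^ k) * X *
        (∑ k ∈ Finset.range p, ((-t) ^ k / (k.factorial : F)) • A ^ k)
      = ∑ ij ∈ Finset.range p ×ˢ Finset.range p, g ij := by
    rw [Finset.sum_product]
    simp only [Finset.sum_mul, Finset.mul_sum, Finset.smul_sum, smul_mul_assoc,
      mul_smul_comm, smul_smul, hg]
    rw [Finset.sum_comm]
    refine Finset.sum_congr rfl fun i hi => Finset.sum_congr rfl fun j hj => ?_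
    ring_nf
  rw [hlhs, hrhs]
  -- square sum = triangle sum (terms outside the triangle vanish)
  rw [← Finset.sum_subset
    (Finset.filter_subset (fun ij : ℕ × ℕ => ij.1 + ij.2 < p) (Finset.range p ×ˢ Finset.range p))
    (fun ij hij hnij => hzero ij (by
      simp only [Finset.mem_filter, Finset.mem_product, Finset.mem_range] at hij hnij
      omega))]
  rw [Finset.sum_sigma']
  refine Finset.sum_nbij' (fun s => s.2) (fun ij => ⟨ij.1 + ij.2, ij⟩) ?_ ?_ ?_ ?_ ?_
  · rintro ⟨k, ij⟩ hs
    simp only [Finset.mem_sigma, Finset.mem_range, Finset.HasAntidiagonal.mem_antidiagonal] at hs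
    simp only [Finset.mem_filter, Finset.mem_product, Finset.mem_range]
    omega
  · intro ij hij
    simp only [Finset.mem_filter, Finset.mem_product, Finset.mem_range] at hij
    simp only [Finset.mem_sigma, Finset.mem_range, Finset.HasAntidiagonal.mem_antidiagonal]
    exact ⟨by omega, trivial⟩
  · rintro ⟨k, ij⟩ hs
    simp only [Finset.mem_sigma, Finset.mem_range, Finset.HasAntidiagonal.mem_antidiagonal] at hs
    simp [hs.2]
  · intro ij hij; rfl
  · rintro ⟨k, ij⟩ hs; rfl
end

section
/- Let F be a field of prime characteristic p, A an associative unital F-algebra, and e ∈ A with e^{⌊(p+1)/2⌋} = 0. Define Y(t) = Σ_{k=0}^{p-1} (t^k / k!) · e^{k}. Then for each t ∈ F the map x ↦ Y(t) · x · Y(-t) is an F-algebra automorphism of A, and it preserves the commutator bracket: Y(t) · (e*x - x*e) · Y(-t) = (Y(t)·e·Y(-t)) * (Y(t)·x·Y(-t)) - (Y(t)·x·Y(-t)) * (Y(t)·e·Y(-t)) for all x ∈ A. -/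
open Finset in
private lemma truncExp_mul_aux {F : Type*} [Field F] (p : ℕ)
    [Fact p.Prime] [CharP F p] {A : Type*} [Ring A] [Algebra F A] (e : A)
    (he : e ^ ((p + 1) / 2) = 0) (a b : F) :
    (∑ k ∈ range p, (a ^ k / (k.factorial : F)) • e ^ k) *
      (∑ k ∈ range p, (b ^ k / (k.factorial : F)) • e ^ k) =
    ∑ k ∈ range p, ((a + b) ^ k / (k.factorial : F)) • e ^ k := by
  have hp : p.Prime := Fact.out
  have hzero : ∀ k, (p + 1) / 2 ≤ k → e ^ k = 0 := by
    intro k hk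
    have : e ^ k = e ^ ((p + 1) / 2) * e ^ (k - (p + 1) / 2) := by
      rw [← pow_add]; congr 1; omega
    rw [this, he, zero_mul]
  have hfac : ∀ n, n < p → ((n.factorial : F)) ≠ 0 := by
    intro n hn
    have : ¬ p ∣ n.factorial := by
      intro h
      exact absurd ((Nat.Prime.dvd_factorial hp).mp h) (by omega)
    simpa [CharP.cast_eq_zero_iff F p] using this
  rw [Finset.sum_mul_sum]
  have step1 : ∀ i ∈ range p, ∀ j ∈ range p,
      (a ^ i / (i.factorial : F)) • e ^ i * ((b ^ j / (j.factorial : F)) • e ^ j)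
      = if j < p - i then ((a ^ i / i.factorial) * (b ^ j / j.factorial)) • e ^ (i + j)
        else 0 := by
    intro i hi j hj
    rw [smul_mul_smul_comm, ← pow_add]
    split_ifs with h
    · rfl
    · rw [hzero (i + j) (by simp only [mem_range] at hi hj; omega), smul_zero]
  rw [Finset.sum_congr rfl (fun i hi => Finset.sum_congr rfl (fun j hj => step1 i hi j hj))]
  have step2 : ∀ i ∈ range p,
      (∑ j ∈ range p, if j < p - i then
          ((a ^ i / i.factorial) * (b ^ j / (j.factorial : F))) • e ^ (i + j) else 0)
      = ∑ j ∈ range (p - i),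
          ((a ^ i / i.factorial) * (b ^ j / (j.factorial : F))) • e ^ (i + j) := by
    intro i hi
    rw [← Finset.sum_filter]
    congr 1
    ext j
    simp only [mem_filter, mem_range]
    omega
  rw [Finset.sum_congr rfl step2]
  rw [← Finset.sum_range_diag_flip p
    (fun i j => ((a ^ i / i.factorial) * (b ^ j / (j.factorial : F))) • e ^ (i + j))]
  refine Finset.sum_congr rfl fun n hn => ?_
  simp only [mem_range] at hn
  have key : ∀ k ∈ range (n + 1),
      ((a ^ k / k.factorial) * (b ^ (n - k) / ((n - k).factorial : F))) • e ^ (k + (n - k))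
      = ((a ^ k * b ^ (n - k) * (n.choose k : F)) / (n.factorial : F)) • e ^ n := by
    intro k hk
    simp only [mem_range, Nat.lt_succ_iff] at hk
    have hkn : k + (n - k) = n := by omega
    rw [hkn]
    congr 1
    have hch : (k.factorial : F) * ((n - k).factorial : F) * (n.choose k : F) =
        (n.factorial : F) := by
      push_cast [← Nat.choose_mul_factorial_mul_factorial hk]
      ring
    have h1 := hfac k (by omega)
    have h2 := hfac (n - k) (by omega)
    have h3 := hfac n hn
    rw [div_mul_div_comm, div_eq_div_iff (mul_ne_zero h1 h2) h3]
    linear_combination (-(a ^ k * b ^ (n - k))) * hch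
  rw [Finset.sum_congr rfl key, ← Finset.sum_smul, ← Finset.sum_div, add_pow]

open Finset in
/-- Under the over-restricted condition `e^{⌊(p+1)/2⌋} = 0`, conjugation
`x ↦ Y(t) x Y(-t)` by the truncated exponential `Y(t) = ∑_{k=0}^{p-1} (t^k/k!) e^k`
is an `F`-algebra automorphism of `A`, and it preserves the commutator bracket. -/
theorem truncExp_conj_is_algebra_automorphism {F : Type*} [Field F] (p : ℕ)
    [Fact p.Prime] [CharP F p] {A : Type*} [Ring A] [Algebra F A] (e : A)
    (he : e ^ ((p + 1) / 2) = 0) (t : F) :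
    let Y : F → A := fun s => ∑ k ∈ Finset.range p, (s ^ k / (k.factorial : F)) • e ^ k
    (∃ φ : A ≃ₐ[F] A, ∀ x : A, φ x = Y t * x * Y (-t)) ∧
      ∀ x : A, Y t * (e * x - x * e) * Y (-t) =
        (Y t * e * Y (-t)) * (Y t * x * Y (-t)) -
          (Y t * x * Y (-t)) * (Y t * e * Y (-t)) := by
  intro Y
  have hp : p.Prime := Fact.out
  have hY0 : (∑ k ∈ Finset.range p, ((0:F) ^ k / (k.factorial : F)) • e ^ k) = 1 := by
    rw [Finset.sum_eq_single 0]
    · simp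
    · intro k _ hk
      simp [zero_pow hk]
    · intro h
      exact absurd (Finset.mem_range.mpr hp.pos) h
  have huv : Y t * Y (-t) = 1 := by
    show (∑ k ∈ Finset.range p, (t ^ k / (k.factorial : F)) • e ^ k) *
      (∑ k ∈ Finset.range p, ((-t) ^ k / (k.factorial : F)) • e ^ k) = 1
    rw [truncExp_mul_aux p e he t (-t), add_neg_cancel, hY0]
  have hvu : Y (-t) * Y t = 1 := by
    show (∑ k ∈ Finset.range p, ((-t) ^ k / (k.factorial : F)) • e ^ k) *
      (∑ k ∈ Finset.range p, (t ^ k / (k.factorial : F)) • e ^ k) = 1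
    rw [truncExp_mul_aux p e he (-t) t, neg_add_cancel, hY0]
  clear hY0
  revert huv hvu
  generalize Y t = u
  generalize Y (-t) = v
  intro huv hvu
  constructor
  · refine ⟨{ toFun := fun x => u * x * v
              invFun := fun x => v * x * u
              left_inv := ?_
              right_inv := ?_
              map_add' := ?_
              map_mul' := ?_
              commutes' := ?_ }, fun x => rfl⟩
    · intro x
      calc v * (u * x * v) * u
          = (v * u) * x * (v * u) := by noncomm_ring
        _ = x := by rw [hvu]; noncomm_ring
    · intro x
      calc u * (v * x * u) * v
          = (u * v) * x * (u * v) := by noncomm_ring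
        _ = x := by rw [huv]; noncomm_ring
    · intro x y
      show u * (x * y) * v = (u * x * v) * (u * y * v)
      calc u * (x * y) * v
          = u * x * (v * u) * y * v := by rw [hvu]; noncomm_ring
        _ = u * x * v * (u * y * v) := by noncomm_ring
    · intro x y
      show u * (x + y) * v = u * x * v + u * y * v
      noncomm_ring
    · intro r
      show u * algebraMap F A r * v = algebraMap F A r
      calc u * algebraMap F A r * v
          = algebraMap F A r * (u * v) := by
            rw [← Algebra.commutes]; noncomm_ring
        _ = algebraMap F A r := by rw [huv]; noncomm_ring
  · intro x
    calc u * (e * x - x * e) * v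
        = u * e * (v * u) * x * v
          - u * x * (v * u) * e * v := by rw [hvu]; noncomm_ring
      _ = (u * e * v) * (u * x * v) -
            (u * x * v) * (u * e * v) := by noncomm_ring
end

section
/- Let F be a field of prime characteristic p, A an associative F-algebra, and e, x ∈ A with e^{⌊(p+1)/2⌋} = 0. Then Σ_{k=0}^{p-1} (1/k!) · (ad e)^k (x) = Σ_{i=0}^{p-1} Σ_{j=0}^{p-1} ((-1)^j / (i! · j!)) · e^{i} · x · e^{j}; that is, the truncated exponential of ad e applied to x equals the full double sum over the square [0, p-1] × [0, p-1]. -/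
/-- Under the over-restricted condition `e^{⌊(p+1)/2⌋} = 0`, the truncated exponential of
`ad e` applied to `x` equals the full double sum over the square `[0,p-1] × [0,p-1]`:
`∑_{k=0}^{p-1} (1/k!) (ad e)^k (x) = ∑_{i,j=0}^{p-1} ((-1)^j/(i! j!)) e^i x e^j`. -/
theorem truncExp_ad_eq_square_sum {F : Type*} [Field F] (p : ℕ) [Fact p.Prime]
    [CharP F p] {A : Type*} [Ring A] [Algebra F A] (e x : A)
    (he : e ^ ((p + 1) / 2) = 0) :
    ∑ k ∈ Finset.range p, ((k.factorial : F)⁻¹) • (fun y => e * y - y * e)^[k] x =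
      ∑ i ∈ Finset.range p, ∑ j ∈ Finset.range p,
        ((-1 : F) ^ j / ((i.factorial : F) * (j.factorial : F))) •
          (e ^ i * x * e ^ j) := by
  classical
  have hp : p.Prime := Fact.out
  -- factorials below p are invertible
  have hfact : ∀ k : ℕ, k < p → ((k.factorial : F)) ≠ 0 := by
    intro k hk
    rw [Ne, CharP.cast_eq_zero_iff F p, hp.dvd_factorial]
    omega
  -- high powers of e vanish
  have hepow : ∀ m : ℕ, (p + 1) / 2 ≤ m → e ^ m = 0 := by
    intro m hm
    calc e ^ m = e ^ ((p + 1) / 2) * e ^ (m - (p + 1) / 2) := by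
          rw [← pow_add]; congr 1; omega
      _ = 0 := by rw [he, zero_mul]
  have hzero : ∀ i j : ℕ, p ≤ i + j → e ^ i * x * e ^ j = 0 := by
    intro i j hij
    rcases le_or_gt ((p + 1) / 2) i with h | h
    · rw [hepow i h, zero_mul, zero_mul]
    · rw [hepow j (by omega), mul_zero]
  -- expand the iterated adjoint
  have step1 : ∀ k ∈ Finset.range p,
      ((k.factorial : F)⁻¹) • (fun y => e * y - y * e)^[k] x =
      ∑ i ∈ Finset.range (k + 1),
        ((-1 : F) ^ (k - i) / ((i.factorial : F) * ((k - i).factorial : F))) •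
          (e ^ i * x * e ^ (k - i)) := by
    intro k hk
    rw [Finset.mem_range] at hk
    have hfun : (fun y : A => e * y - y * e) =
        ⇑(LinearMap.mulLeft F e - LinearMap.mulRight F e) := by
      funext y; simp
    have hcomm : Commute (LinearMap.mulLeft F e) ((-1 : F) • LinearMap.mulRight F e) :=
      (LinearMap.commute_mulLeft_right e e).smul_right _
    have hexp : (fun y => e * y - y * e)^[k] x =
        ∑ i ∈ Finset.range (k + 1),
          ((-1 : F) ^ (k - i) * (k.choose i : F)) • (e ^ i * x * e ^ (k - i)) := by
      rw [hfun, ← Module.End.pow_apply]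
      have : LinearMap.mulLeft F e - LinearMap.mulRight F e =
          LinearMap.mulLeft F e + (-1 : F) • LinearMap.mulRight F e := by
        ext y; simp [sub_eq_add_neg]
      rw [this, hcomm.add_pow, LinearMap.sum_apply]
      refine Finset.sum_congr rfl fun i hi => ?_
      rw [smul_pow]
      simp only [Module.End.mul_apply, LinearMap.smul_apply, Module.End.natCast_apply,
        LinearMap.pow_mulLeft, LinearMap.pow_mulRight, LinearMap.mulLeft_apply,
        LinearMap.mulRight_apply]
      rw [← Nat.cast_smul_eq_nsmul F]
      simp only [smul_smul, mul_smul_comm, smul_mul_assoc, mul_assoc]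
    rw [hexp, Finset.smul_sum]
    refine Finset.sum_congr rfl fun i hi => ?_
    rw [Finset.mem_range] at hi
    rw [smul_smul]
    congr 1
    have hik : i ≤ k := by omega
    have hC : (k.choose i : F) * ((i.factorial : F) * ((k - i).factorial : F)) =
        (k.factorial : F) := by
      rw [← Nat.cast_mul, ← Nat.cast_mul, ← mul_assoc,
        Nat.choose_mul_factorial_mul_factorial hik]
    have h1 : (i.factorial : F) ≠ 0 := hfact i (by omega)
    have h2 : ((k - i).factorial : F) ≠ 0 := hfact (k - i) (by omega)
    have h3 : (k.factorial : F) ≠ 0 := hfact k hk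
    field_simp
    rw [← hC]; ring
  rw [Finset.sum_congr rfl step1]
  -- rewrite RHS as a sum over the product, split off the vanishing part
  rw [← Finset.sum_product']
  rw [← Finset.sum_filter_add_sum_filter_not (Finset.range p ×ˢ Finset.range p)
    (fun q => q.1 + q.2 < p)]
  have hvanish : ∑ q ∈ (Finset.range p ×ˢ Finset.range p).filter (fun q => ¬ q.1 + q.2 < p),
      ((-1 : F) ^ q.2 / ((q.1.factorial : F) * (q.2.factorial : F))) •
        (e ^ q.1 * x * e ^ q.2) = 0 := by
    refine Finset.sum_eq_zero fun q hq => ?_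
    rw [Finset.mem_filter] at hq
    rw [hzero q.1 q.2 (by omega), smul_zero]
  rw [hvanish, add_zero]
  rw [Finset.sum_sigma']
  refine Finset.sum_nbij' (fun σ => (σ.2, σ.1 - σ.2)) (fun q => ⟨q.1 + q.2, q.1⟩)
    ?_ ?_ ?_ ?_ ?_
  · rintro ⟨k, i⟩ hσ
    simp only [Finset.mem_sigma, Finset.mem_range] at hσ
    simp only [Finset.mem_filter, Finset.mem_product, Finset.mem_range]
    omega
  · rintro ⟨i, j⟩ hq
    simp only [Finset.mem_filter, Finset.mem_product, Finset.mem_range] at hq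
    simp only [Finset.mem_sigma, Finset.mem_range]
    omega
  · rintro ⟨k, i⟩ hσ
    simp only [Finset.mem_sigma, Finset.mem_range] at hσ
    simp only [Sigma.mk.inj_iff]
    constructor
    · omega
    · exact heq_of_eq rfl
  · rintro ⟨i, j⟩ hq
    dsimp only
    simp only [Prod.mk.injEq, true_and]
    omega
  · rintro ⟨k, i⟩ hσ
    rfl
end
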